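/- Let S be a finite normal orthogroup whose idempotents form a rectangular band (i.e., S satisfies x^ω = x^ω y^ω x^ω), let e be an idempotent of S, and let H_e be the maximal subgroup at e. Then the map ψ : S → H_e given by ψ(s) = ese is a semigroup homomorphism, and the map α : S → E(S) × H_e given by α(s) = (s^ω, ese) is an injective homomorphism. -/
import Mathlib


/-- `spow a n` is the power `a^(n+1)` in a semigroup. -/
def spow {S : Type*} [Semigroup S] (a : S) : ℕ → S
  | 0 => a
  | n + 1 => spow a n * a

/-- For a finite normal orthogroup whose idempotents form a rectangular band
(x^ω = x^ω y^ω x^ω) and an idempotent e, the map ψ(s) = ese is a homomorphism of S into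
the maximal subgroup H_e = {s | s^ω = e}, and α(s) = (s^ω, ese) is an injective
homomorphism into E(S) × H_e. -/
theorem rectangular_group_decomposition
    {S : Type*} [Semigroup S] [Fintype S] (ω : S → S)
    (hpow : ∀ a : S, ∃ n : ℕ, ω a = spow a n)
    (hidem : ∀ a : S, ω a * ω a = ω a)
    (hcr_left : ∀ a : S, ω a * a = a)
    (hcr_right : ∀ a : S, a * ω a = a)
    (horthodox : ∀ e f : S, e * e = e → f * f = f → (e * f) * (e * f) = e * f)
    (hnormal : ∀ e f g : S, e * e = e → f * f = f → g * g = g →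
      e * f * e * g * e = e * g * e * f * e)
    (hrect : ∀ s t : S, ω s = ω s * ω t * ω s)
    (e : S) (he : e * e = e) :
    (∀ s : S, ω (e * s * e) = e) ∧
    (∀ s t : S, e * (s * t) * e = (e * s * e) * (e * t * e)) ∧
    (∀ s t : S, ω (s * t) = ω s * ω t) ∧
    (∀ s t : S, ω s = ω t → e * s * e = e * t * e → s = t) := by
  -- ω of an idempotent is itself
  have hspow_idem : ∀ f : S, f * f = f → ∀ n, spow f n = f := by
    intro f hf n
    induction n with
    | zero => rfl
    | succ n ih => simp [spow, ih, hf]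
  have hωid : ∀ f : S, f * f = f → ω f = f := by
    intro f hf
    obtain ⟨n, hn⟩ := hpow f
    rw [hn, hspow_idem f hf]
  -- rectangular band 3-variable identity for idempotents
  have hfgh : ∀ f g h : S, f * f = f → g * g = g → h * h = h → f * g * h = f * h := by
    intro f g h hf hg hh
    have h1 : f = f * (g * h) * f := by
      have := hrect f (g * h)
      rwa [hωid f hf, hωid _ (horthodox g h hg hh)] at this
    have h2 : h * f * h = h := by
      have := hrect h f
      rw [hωid h hh, hωid f hf] at this
      exact this.symm
    symm
    calc f * h = (f * (g * h) * f) * h := by rw [← h1]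
      _ = f * g * (h * f * h) := by simp [mul_assoc]
      _ = f * g * h := by rw [h2]
  -- key lemma: idempotents in the middle can be removed
  have hkey : ∀ e' : S, e' * e' = e' → ∀ y z : S, y * e' * z = y * z := by
    intro e' he' y z
    calc y * e' * z = (y * ω y) * e' * (ω z * z) := by rw [hcr_right, hcr_left]
      _ = y * (ω y * e' * ω z) * z := by simp [mul_assoc]
      _ = y * (ω y * ω z) * z := by rw [hfgh (ω y) e' (ω z) (hidem y) he' (hidem z)]
      _ = (y * ω y) * (ω z * z) := by simp [mul_assoc]
      _ = y * z := by rw [hcr_right, hcr_left]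
  -- part 1 : ω (e s e) = e
  have part1 : ∀ s : S, ω (e * s * e) = e := by
    intro s
    obtain ⟨n, hn⟩ := hpow (e * s * e)
    have hle : e * (e * s * e) = e * s * e := by
      calc e * (e * s * e) = (e * e) * s * e := by simp [mul_assoc]
        _ = e * s * e := by rw [he]
    have hre : (e * s * e) * e = e * s * e := by
      rw [mul_assoc (e * s) e e, he]
    have habs : ∀ m, e * spow (e * s * e) m = spow (e * s * e) m ∧
        spow (e * s * e) m * e = spow (e * s * e) m := by
      intro m
      induction m with
      | zero => exact ⟨hle, hre⟩
      | succ m ih =>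
        constructor
        · show e * (spow (e * s * e) m * (e * s * e)) = spow (e * s * e) m * (e * s * e)
          rw [← mul_assoc, ih.1]
        · show (spow (e * s * e) m * (e * s * e)) * e = spow (e * s * e) m * (e * s * e)
          rw [mul_assoc, hre]
    have hl : e * ω (e * s * e) = ω (e * s * e) := by rw [hn]; exact (habs n).1
    have hr : ω (e * s * e) * e = ω (e * s * e) := by rw [hn]; exact (habs n).2
    have hefe : e = e * ω (e * s * e) * e := by
      have := hrect e (e * s * e)
      rwa [hωid e he] at this
    calc ω (e * s * e) = e * ω (e * s * e) * e := by rw [hl, hr]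
      _ = e := hefe.symm
  refine ⟨part1, ?_, ?_, ?_⟩
  -- part 2 : ψ is a homomorphism
  · intro s t
    have he' : ∀ x : S, e * (e * x) = e * x := by
      intro x; rw [← mul_assoc, he]
    have h1 : (e * s) * e * (t * e) = (e * s) * (t * e) := hkey e he (e * s) (t * e)
    simp only [mul_assoc] at h1 ⊢
    simp only [he']
    exact h1.symm
  -- part 3 : ω is a homomorphism
  · intro s t
    set f := ω s with hf
    set g := ω t with hg
    have hfi : f * f = f := hidem s
    have hgi : g * g = g := hidem t
    have hu : (f * g) * (f * g) = f * g := horthodox f g hfi hgi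
    -- f*g absorbs s*t on both sides
    have hleft : (f * g) * (s * t) = s * t := by
      calc (f * g) * (s * t) = f * g * (f * s) * t := by rw [hcr_left s]; simp [mul_assoc]
        _ = (f * g * f) * (s * t) := by simp [mul_assoc]
        _ = f * (s * t) := by
            have := hrect s t
            rw [← hf, ← hg] at this
            rw [← this]
        _ = (f * s) * t := by rw [mul_assoc]
        _ = s * t := by rw [hcr_left s]
    have hright : (s * t) * (f * g) = s * t := by
      calc (s * t) * (f * g) = s * (t * g) * (f * g) := by rw [hcr_right t]
        _ = s * t * (g * f * g) := by simp [mul_assoc]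
        _ = s * t * g := by
            have := hrect t s
            rw [← hf, ← hg] at this
            rw [← this]
        _ = s * (t * g) := by rw [mul_assoc]
        _ = s * t := by rw [hcr_right t]
    obtain ⟨n, hn⟩ := hpow (s * t)
    have habs : ∀ m, (f * g) * spow (s * t) m = spow (s * t) m ∧
        spow (s * t) m * (f * g) = spow (s * t) m := by
      intro m
      induction m with
      | zero => exact ⟨hleft, hright⟩
      | succ m ih =>
        refine ⟨?_, ?_⟩
        · show (f * g) * (spow (s * t) m * (s * t)) = spow (s * t) m * (s * t)
          rw [← mul_assoc, ih.1]
        · show (spow (s * t) m * (s * t)) * (f * g) = spow (s * t) m * (s * t)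
          rw [mul_assoc, hright]
    have hl : (f * g) * ω (s * t) = ω (s * t) := by rw [hn]; exact (habs n).1
    have hr : ω (s * t) * (f * g) = ω (s * t) := by rw [hn]; exact (habs n).2
    have h2 : f * g = (f * g) * ω (s * t) * (f * g) := by
      have := hrect (f * g) (s * t)
      rwa [hωid (f * g) hu] at this
    calc ω (s * t) = (f * g) * ω (s * t) * (f * g) := by rw [hl, hr]
      _ = f * g := h2.symm
  -- part 4 : injectivity
  · intro s t hω hese
    have hself : ∀ u : S, ω u * (e * u * e) * ω u = u := by
      intro u
      calc ω u * (e * u * e) * ω u = ω u * e * (u * e * ω u) := by simp [mul_assoc]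
        _ = ω u * e * (u * ω u) := by rw [hkey e he u (ω u)]
        _ = ω u * e * u := by rw [hcr_right u]
        _ = ω u * u := by rw [hkey e he (ω u) u]
        _ = u := hcr_left u
    calc s = ω s * (e * s * e) * ω s := (hself s).symm
      _ = ω t * (e * t * e) * ω t := by rw [hω, hese]
      _ = t := hself t
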